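/- Let r₃, r₅ be nonnegative integers with r₃ < r₅, and suppose complex numbers w_0, w_1, …, w_{r₃} satisfy Σ_{i=0}^{min(r₅-j, r₃)} C(r₅-i, j) w_i = 0 for every 0 ≤ j ≤ r₃, where C(n,k) is the binomial coefficient. Then w_i = 0 for all i. -/

import Mathlib

open Polynomial Finset

/-- if r₃ < r₅ and Σ_{i=0}^{min(r₅-j,r₃)} C(r₅-i, j) w_i = 0 for all 0 ≤ j ≤ r₃,
then all w_i vanish (0 ≤ i ≤ r₃). -/
theorem stmt5 (r₃ r₅ : ℕ) (h : r₃ < r₅) (w : ℕ → ℂ)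
    (hsum : ∀ j ≤ r₃,
      ∑ i ∈ Finset.range (min (r₅ - j) r₃ + 1), ((r₅ - i).choose j : ℂ) * w i = 0) :
    ∀ i ≤ r₃, w i = 0 := by
  set f : ℂ[X] := ∑ i ∈ range (r₃ + 1), monomial (r₅ - i) (w i) with hf
  -- full-range version of hsum
  have hsum' : ∀ j ≤ r₃, ∑ i ∈ range (r₃ + 1), ((r₅ - i).choose j : ℂ) * w i = 0 := by
    intro j hj
    rw [← hsum j hj]
    refine (Finset.sum_subset ?_ ?_).symm
    · intro x hx
      simp only [mem_range] at hx ⊢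
      rcases le_total (r₅ - j) r₃ with hc | hc
      · rw [min_eq_left hc] at hx; omega
      · rw [min_eq_right hc] at hx; omega
    · intro x hx hx'
      simp only [mem_range] at hx hx'
      rcases le_total (r₅ - j) r₃ with hc | hc
      · rw [min_eq_left hc] at hx'
        have : r₅ - x < j := by omega
        rw [Nat.choose_eq_zero_of_lt this]
        simp
      · rw [min_eq_right hc] at hx'
        omega

  -- hasse derivatives vanish at 1
  have hhd : ∀ j ≤ r₃, (hasseDeriv j f).eval 1 = 0 := by
    intro j hj
    rw [hf, map_sum]
    rw [eval_finset_sum]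
    have : ∀ i ∈ range (r₃ + 1),
        (hasseDeriv j (monomial (r₅ - i) (w i))).eval 1 = ((r₅ - i).choose j : ℂ) * w i := by
      intro i hi
      rw [hasseDeriv_monomial, eval_monomial, one_pow, mul_one, Nat.cast_comm]
    rw [Finset.sum_congr rfl this, hsum' j hj]
  -- (X-1)^(r₃+1) ∣ f
  have hdvd1 : (X - 1 : ℂ[X]) ^ (r₃ + 1) ∣ f := by
    have hX : (X : ℂ[X]) ^ (r₃ + 1) ∣ taylor 1 f := by
      rw [Polynomial.X_pow_dvd_iff]
      intro d hd
      rw [taylor_coeff]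
      exact hhd d (by omega)
    obtain ⟨g, hg⟩ := hX
    refine ⟨taylor (-1) g, ?_⟩
    have := congrArg (taylor (-1 : ℂ)) hg
    rw [taylor_taylor] at this
    simp only [neg_add_cancel, taylor_zero] at this
    rw [this]
    have : taylor (-1 : ℂ) (X ^ (r₃ + 1) * g)
        = (taylorAlgHom (-1 : ℂ)) X ^ (r₃ + 1) * taylor (-1) g := by
      rw [← map_pow]
      exact taylor_mul _ _ _
    rw [this]
    simp [coe_taylorAlgHom, taylor_X, sub_eq_add_neg]
  -- X^(r₅-r₃) ∣ f
  have hdvd2 : (X : ℂ[X]) ^ (r₅ - r₃) ∣ f := by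
    rw [hf]
    apply Finset.dvd_sum
    intro i hi
    simp only [mem_range] at hi
    rw [← C_mul_X_pow_eq_monomial]
    apply Dvd.dvd.mul_left
    exact pow_dvd_pow _ (by omega)
  -- coprime, product divides
  have hcop : IsCoprime ((X : ℂ[X]) ^ (r₅ - r₃)) ((X - 1 : ℂ[X]) ^ (r₃ + 1)) := by
    apply IsCoprime.pow
    exact ⟨1, -1, by ring⟩
  have hdvd : (X : ℂ[X]) ^ (r₅ - r₃) * (X - 1) ^ (r₃ + 1) ∣ f := hcop.mul_dvd hdvd2 hdvd1
  -- degree bound forces f = 0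
  have hfz : f = 0 := by
    by_contra hne
    have hle := Polynomial.natDegree_le_of_dvd hdvd hne
    have hX1 : (X - 1 : ℂ[X]) ≠ 0 := by
      simpa using Polynomial.X_sub_C_ne_zero (1 : ℂ)
    have h1 : ((X : ℂ[X]) ^ (r₅ - r₃) * (X - 1) ^ (r₃ + 1)).natDegree = r₅ + 1 := by
      rw [Polynomial.natDegree_mul (pow_ne_zero _ Polynomial.X_ne_zero) (pow_ne_zero _ hX1),
        Polynomial.natDegree_pow, Polynomial.natDegree_pow, Polynomial.natDegree_X]
      have : (X - 1 : ℂ[X]).natDegree = 1 := by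
        simpa using Polynomial.natDegree_X_sub_C (1 : ℂ)
      rw [this]; omega
    have h2 : f.natDegree ≤ r₅ := by
      rw [hf]
      apply Polynomial.natDegree_sum_le_of_forall_le
      intro i hi
      exact le_trans (Polynomial.natDegree_monomial_le _) (by omega)
    omega
  intro i hi
  have := congrArg (fun p => Polynomial.coeff p (r₅ - i)) hfz
  simp only [hf, finset_sum_coeff, coeff_monomial, coeff_zero] at this
  rw [Finset.sum_eq_single i] at this
  · simpa using this
  · intro b hb hbi
    simp only [mem_range] at hb
    rw [if_neg (by omega)]
  · intro hcon
    exact absurd (mem_range.mpr (by omega)) hcon
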